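/- Symmetrically: if an SCC X of G has a unique outdoor vertex i (the unique vertex of X with a successor outside X), and e ∉ X, then no Hamiltonian path of G from s to e contains an arc (i, j) with j ∈ X. -/

import Mathlib

variable {V : Type*}

/-- Reachability in a directed graph given by arc relation `A`. -/
def Reach (A : V → V → Prop) : V → V → Prop := Relation.ReflTransGen A

/-- Two vertices are in the same strongly connected component. -/
def SameSCC (A : V → V → Prop) (u v : V) : Prop := Reach A u v ∧ Reach A v u

/-- The strongly connected component of a vertex. -/
def sccOf (A : V → V → Prop) (v : V) : Set V := {u | SameSCC A v u}

/-- A set is a strongly connected component. -/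
def IsSCC (A : V → V → Prop) (X : Set V) : Prop := ∃ v, X = sccOf A v

/-- Arcs of the reduced graph (condensation): between distinct SCCs joined by an arc of `A`. -/
def CondArc (A : V → V → Prop) (X Y : Set V) : Prop :=
  IsSCC A X ∧ IsSCC A Y ∧ X ≠ Y ∧ ∃ u ∈ X, ∃ v ∈ Y, A u v

/-- A directed graph is acyclic: no arc lies on a directed cycle. -/
def Acyclic (A : V → V → Prop) : Prop := ∀ u v, A u v → ¬ Reach A v u

/-- A Hamiltonian path of the digraph `A`, as a duplicate-free list visiting every vertex. -/
def IsHamList (A : V → V → Prop) (p : List V) : Prop :=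
  p.Chain' A ∧ p.Nodup ∧ ∀ v, v ∈ p

/-- A Hamiltonian path from `s` to `e`. -/
def IsHamPath (A : V → V → Prop) (s e : V) (p : List V) : Prop :=
  IsHamList A p ∧ p.head? = some s ∧ p.getLast? = some e

/-- A Hamiltonian path of the reduced graph: a duplicate-free list of SCCs, chained by
condensation arcs, containing every SCC. -/
def RHamPath (A : V → V → Prop) (P : List (Set V)) : Prop :=
  (∀ X ∈ P, IsSCC A X) ∧ P.Chain' (CondArc A) ∧ P.Nodup ∧ ∀ X, IsSCC A X → X ∈ P

/-- If an SCC `X` (with `e ∉ X`) has a unique outdoor `i`, then no Hamiltonian path of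
`G` from `s` to `e` contains an internal arc `(i, j)` with `j ∈ X`. -/
theorem unique_outdoor_internal_arc_infeasible (A : V → V → Prop) (s e : V)
    (he : ∀ u, ¬ A e u)
    (X : Set V) (hX : IsSCC A X) (heX : e ∉ X)
    (i : V) (hiX : i ∈ X)
    (houtdoor : ∃ u, u ∉ X ∧ A i u)
    (huniq : ∀ x ∈ X, (∃ u, u ∉ X ∧ A x u) → x = i) :
    ∀ j ∈ X, ∀ H : List V, IsHamPath A s e H → ¬ [i, j] <:+: H := by
  intro j hjX H hHam hinf
  obtain ⟨⟨hchain, hnodup, _⟩, _, hlast⟩ := hHam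
  obtain ⟨t, r, heq⟩ := hinf
  have heq' : H = t ++ i :: j :: r := by simpa using heq.symm
  subst heq'
  -- the suffix j :: r
  have hsuf : (j :: r) <:+ t ++ i :: j :: r := ⟨t ++ [i], by simp⟩
  have hchain' : (j :: r).Chain' A := hchain.suffix hsuf
  have hnotin : i ∉ j :: r := by
    have h1 : (i :: j :: r).Nodup := (hnodup.sublist (List.suffix_append t _).sublist)
    exact (List.nodup_cons.mp h1).1
  -- last of j :: r is e
  have hlast2 : (j :: r).getLast (List.cons_ne_nil _ _) = e := by
    have h3 : (t ++ i :: j :: r).getLast? = (j :: r).getLast? := by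
      rw [List.getLast?_append]
      simp [List.getLast?_eq_getLast (List.cons_ne_nil j r), List.getLast_cons, Option.or]
    rw [h3, List.getLast?_eq_getLast (List.cons_ne_nil _ _)] at hlast
    exact Option.some_injective _ hlast
  -- find the exit vertex
  have key : ∀ (l : List V) (x : V), (x :: l).Chain' A → x ∈ X →
      (x :: l).getLast (List.cons_ne_nil _ _) ∉ X →
      ∃ a ∈ x :: l, ∃ b, b ∉ X ∧ A a b ∧ a ∈ X := by
    intro l
    induction l with
    | nil => intro x _ hx hl; simp at hl; exact absurd hx hl
    | cons y l' ih =>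
      intro x hc hx hl
      rcases List.isChain_cons_cons.mp hc with ⟨hxy, hc'⟩
      by_cases hy : y ∈ X
      · obtain ⟨a, ha, b, hb⟩ := ih y hc' hy (by rwa [List.getLast_cons] at hl)
        exact ⟨a, List.mem_cons_of_mem _ ha, b, hb⟩
      · exact ⟨x, List.mem_cons_self, y, hy, hxy, hx⟩
  obtain ⟨a, haMem, b, hbX, hab, haX⟩ := key r j hchain' hjX (by rwa [hlast2])
  have : a = i := huniq a haX ⟨b, hbX, hab⟩
  exact hnotin (this ▸ haMem)
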